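/- Let T(x) = 2x² − 1 and let w ∈ ℂ \ [−1, 1]. Then: (a) T^k(w) ∉ [−1, 1] for every k ≥ 0 (in particular T^k(w) ≠ 0); (b) setting p_j(w) = 2^j · ∏_{k=0}^{j−1} T^k(w) for j ≥ 1, the series f(w) = Σ_{j=1}^{∞} 1/p_j(w) converges absolutely, and its sum satisfies f(w)² − 2w·f(w) + 1 = 0 with |f(w)| < 1; that is, f(w) = w − √(w² − 1) for the square-root branch making the modulus less than 1. -/

import Mathlib

open Filter Finset


/-- If `u + u⁻¹ = 2x` with `x` real, `x ∈ [-1,1]`, `u ≠ 0`, then `‖u‖ = 1`. -/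
lemma aux_abs_one (x : ℝ) (hx1 : -1 ≤ x) (hx2 : x ≤ 1) (u : ℂ) (hu : u ≠ 0)
    (h : u + u⁻¹ = 2 * (x : ℂ)) : ‖u‖ = 1 := by
  set c := (starRingEnd ℂ) u with hc
  have hcne : c ≠ 0 := by simpa [hc] using hu
  have hconj : c + c⁻¹ = 2 * (x : ℂ) := by
    have := congrArg (starRingEnd ℂ) h
    simpa [map_add, map_inv₀, Complex.conj_ofReal, map_mul, map_ofNat] using this
  have h2 : u + u⁻¹ = c + c⁻¹ := by rw [h, hconj]
  have key : (u - c) * (u * c - 1) = 0 := by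
    have h3 := congrArg (fun t => u * c * t) h2
    field_simp at h3
    have key' : (u * c) * ((u - c) * (u * c - 1)) = 0 := by linear_combination u * c * h3
    rcases mul_eq_zero.mp key' with h' | h'
    · exact absurd h' (mul_ne_zero hu hcne)
    · exact h' 
  rcases mul_eq_zero.mp key with hk | hk
  · -- u is real
    have him : u.im = 0 := by
      have : c = u := by linear_combination -hk
      exact Complex.conj_eq_iff_im.mp this
    set r := u.re with hr
    have hur : u = (r : ℂ) := by
      exact Complex.ext rfl him
    have hrne : r ≠ 0 := by
      intro h0; apply hu; rw [hur, h0]; simp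
    have hreal : r + r⁻¹ = 2 * x := by
      rw [hur] at h; exact_mod_cast h
    have heq : r ^ 2 + 1 = 2 * x * r := by
      field_simp at hreal; linear_combination hreal
    have hxr : x * r ≤ |r| := by
      calc x * r ≤ |x * r| := le_abs_self _
        _ = |x| * |r| := abs_mul _ _
        _ ≤ 1 * |r| := by
            exact mul_le_mul_of_nonneg_right (abs_le.mpr ⟨hx1, hx2⟩) (abs_nonneg r)
        _ = |r| := one_mul _
    have hsq : (|r| - 1) ^ 2 ≤ 0 := by nlinarith [sq_abs r]
    have habs1 : |r| = 1 := by nlinarith [sq_nonneg (|r| - 1)]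
    rw [hur, Complex.norm_real, Real.norm_eq_abs, habs1]
  · -- |u| = 1
    have : u * c = 1 := by linear_combination hk
    rw [hc, Complex.mul_conj] at this
    have hn : Complex.normSq u = 1 := by exact_mod_cast this
    have : ‖u‖ ^ 2 = 1 := by
      rw [Complex.sq_norm]; exact hn
    nlinarith [norm_nonneg u]

/-- Existence of `z` with `|z| < 1` and `z² - 2wz + 1 = 0` when `w ∉ [-1,1]`. -/
lemma aux_exists_z (w : ℂ) (hw : ∀ x : ℝ, x ∈ Set.Icc (-1 : ℝ) 1 → (x : ℂ) ≠ w) :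
    ∃ z : ℂ, z ≠ 0 ∧ ‖z‖ < 1 ∧ z ^ 2 - 2 * w * z + 1 = 0 := by
  obtain ⟨s, hs⟩ := IsAlgClosed.exists_pow_nat_eq (k := ℂ) (w ^ 2 - 1) (n := 2) (by norm_num)
  have hprod : (w - s) * (w + s) = 1 := by linear_combination -hs
  have hq1 : (w - s) ^ 2 - 2 * w * (w - s) + 1 = 0 := by linear_combination hs
  have hq2 : (w + s) ^ 2 - 2 * w * (w + s) + 1 = 0 := by linear_combination hs
  have habs : ‖w - s‖ * ‖w + s‖ = 1 := by rw [← norm_mul, hprod, norm_one]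
  -- pick the root with norm ≤ 1
  obtain ⟨z, hzq, hzle, hzo⟩ : ∃ z : ℂ, z ^ 2 - 2 * w * z + 1 = 0 ∧ ‖z‖ ≤ 1 ∧
      ∃ z' : ℂ, z * z' = 1 := by
    rcases le_total ‖w - s‖ 1 with hle | hle
    · exact ⟨w - s, hq1, hle, w + s, hprod⟩
    · refine ⟨w + s, hq2, ?_, w - s, by linear_combination hprod⟩
      by_contra hgt
      push_neg at hgt
      nlinarith [norm_nonneg (w - s), norm_nonneg (w + s)]
  obtain ⟨z', hzz'⟩ := hzo
  have hz0 : z ≠ 0 := by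
    intro h0; rw [h0, zero_mul] at hzz'; exact one_ne_zero hzz'.symm
  refine ⟨z, hz0, lt_of_le_of_ne hzle ?_, hzq⟩
  intro habs1
  -- then w = Re z ∈ [-1,1], contradiction
  have hsum : z + z⁻¹ = 2 * w := by
    field_simp
    linear_combination hzq
  have hinv : z⁻¹ = (starRingEnd ℂ) z := Complex.inv_eq_conj habs1
  have hwre : (↑(z.re) : ℂ) = w := by
    have := hsum
    rw [hinv, Complex.add_conj] at this
    have h2 : (↑(2 * z.re) : ℂ) = 2 * w := this
    push_cast at h2
    field_simp at h2
    exact_mod_cast h2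
  have hre : z.re ∈ Set.Icc (-1 : ℝ) 1 := by
    have := Complex.abs_re_le_norm z
    rw [habs1] at this
    constructor <;> [nlinarith [abs_nonneg z.re, neg_abs_le z.re]; nlinarith [le_abs_self z.re]]
  exact hw z.re hre hwre

/-- For `w ∉ [−1,1]`, no iterate of the Tchebyshev polynomial `T(x) = 2x² − 1` at `w` lies in
`[−1,1]` (in particular none vanishes); the series `f(w) = Σ_{j≥1} 1/p_j(w)`, where
`p_j(w) = 2ʲ ∏_{k<j} Tᵏ(w)`, converges absolutely, and its sum satisfies
`f(w)² − 2w·f(w) + 1 = 0` with `|f(w)| < 1`, i.e. `f(w) = w − √(w² − 1)` for the branch of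
the square root making the modulus less than one. -/
theorem stmt18 (T : ℂ → ℂ) (hT : ∀ x, T x = 2 * x ^ 2 - 1)
    (w : ℂ) (hw : ∀ x : ℝ, x ∈ Set.Icc (-1 : ℝ) 1 → (x : ℂ) ≠ w)
    (p : ℕ → ℂ) (hp : ∀ j, p j = 2 ^ j * ∏ k ∈ Finset.range j, T^[k] w) :
    (∀ k : ℕ, (∀ x : ℝ, x ∈ Set.Icc (-1 : ℝ) 1 → (x : ℂ) ≠ T^[k] w) ∧ T^[k] w ≠ 0) ∧
    Summable (fun j : ℕ => ‖(p (j + 1))⁻¹‖) ∧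
    (∑' j : ℕ, (p (j + 1))⁻¹) ^ 2 - 2 * w * (∑' j : ℕ, (p (j + 1))⁻¹) + 1 = 0 ∧
    ‖∑' j : ℕ, (p (j + 1))⁻¹‖ < 1 := by
  obtain ⟨z, hz0, hz1, hzq⟩ := aux_exists_z w hw
  have hzw : z + z⁻¹ = 2 * w := by field_simp; linear_combination hzq
  set u : ℕ → ℂ := fun k => z ^ (2 ^ k) with hu
  have hu0 : ∀ k, u k ≠ 0 := fun k => pow_ne_zero _ hz0
  have husq : ∀ k, u (k + 1) = (u k) ^ 2 := by
    intro k; simp only [hu]; rw [pow_succ, pow_mul]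
  have habsu : ∀ k, ‖u k‖ = ‖z‖ ^ (2 ^ k) := by intro k; simp [hu, norm_pow]
  have habs_u : ∀ k, ‖u k‖ < 1 := by
    intro k
    rw [habsu]
    exact pow_lt_one₀ (norm_nonneg z) hz1 (Nat.pos_of_ne_zero (by positivity)).ne'
  have hu_base : u 0 = z := by simp [hu]
  clear hu
  clear_value u
  have hone_sub : ∀ k, (1 : ℂ) - u k ≠ 0 := by
    intro k h
    have h2 : u k = 1 := by linear_combination -h
    have h3 := habs_u k; rw [h2] at h3; simp at h3
  have hone_add : ∀ k, (1 : ℂ) + u k ≠ 0 := by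
    intro k h
    have h2 : u k = -1 := by linear_combination h
    have h3 := habs_u k; rw [h2] at h3; simp at h3
  have husub : ∀ k, u k - (u k)⁻¹ ≠ 0 := by
    intro k h
    have h2 : (u k) ^ 2 = 1 := by
      have h3 := hu0 k
      field_simp at h
      linear_combination h
    have : (1 - u k) * (1 + u k) = 0 := by linear_combination -h2
    rcases mul_eq_zero.mp this with h' | h'
    · exact hone_sub k h'
    · exact hone_add k (by linear_combination h')
  have hzsub : z - z⁻¹ ≠ 0 := by
    have := husub 0
    rwa [hu_base] at this
  have hIter : ∀ k, T^[k] w = (u k + (u k)⁻¹) / 2 := by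
    intro k
    induction k with
    | zero =>
      simp only [Function.iterate_zero, id_eq, hu_base]
      rw [hzw]; ring
    | succ k ih =>
      rw [Function.iterate_succ_apply', ih, hT, husq]
      have := hu0 k
      field_simp
      ring
  have hProd : ∀ j, (z - z⁻¹) * p j = u j - (u j)⁻¹ := by
    intro j
    induction j with
    | zero => simp [hp, hu_base]
    | succ j ih =>
      have hstep : p (j + 1) = p j * (2 * T^[j] w) := by
        rw [hp, hp, Finset.prod_range_succ]; ring
      rw [hstep, hIter j, husq]
      have hune := hu0 j
      calc (z - z⁻¹) * (p j * (2 * ((u j + (u j)⁻¹) / 2)))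
          = ((z - z⁻¹) * p j) * (u j + (u j)⁻¹) := by ring
        _ = (u j - (u j)⁻¹) * (u j + (u j)⁻¹) := by rw [ih]
        _ = (u j) ^ 2 - ((u j) ^ 2)⁻¹ := by field_simp; ring
  have hpne : ∀ j, p j ≠ 0 := by
    intro j h
    have := hProd j
    rw [h, mul_zero] at this
    exact husub j this.symm
  have hpinv : ∀ j, (p j)⁻¹ = (z - z⁻¹) / (u j - (u j)⁻¹) := by
    intro j
    have hpj : p j = (u j - (u j)⁻¹) / (z - z⁻¹) := by
      rw [eq_div_iff hzsub]; linear_combination hProd j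
    rw [hpj, inv_div]
  -- telescoping form
  set G : ℕ → ℂ := fun n => (z - z⁻¹) * (1 - u (n + 1))⁻¹ with hG
  have hterm : ∀ j, (p (j + 1))⁻¹ = G (j + 1) - G j := by
    intro j
    rw [hpinv, hG]
    simp only
    rw [husq (j + 1)]
    have h1 := hu0 (j + 1)
    have h2 := hone_sub (j + 1)
    have h3 : (1 : ℂ) - (u (j + 1)) ^ 2 ≠ 0 := by
      intro h
      have : (1 - u (j + 1)) * (1 + u (j + 1)) = 0 := by linear_combination h
      rcases mul_eq_zero.mp this with h' | h'
      · exact hone_sub _ h'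
      · exact hone_add _ (by linear_combination h')
    rw [div_eq_mul_inv]
    have hkey : (u (j + 1) - (u (j + 1))⁻¹)⁻¹ = (1 - (u (j + 1)) ^ 2)⁻¹ - (1 - u (j + 1))⁻¹ := by
      apply inv_eq_of_mul_eq_one_right
      have r1 : (1 - (u (j + 1)) ^ 2) * (1 - (u (j + 1)) ^ 2)⁻¹ = 1 := mul_inv_cancel₀ h3
      have r2 : (1 - u (j + 1)) * (1 - u (j + 1))⁻¹ = 1 := mul_inv_cancel₀ h2
      have r3 : u (j + 1) * (u (j + 1))⁻¹ = 1 := mul_inv_cancel₀ h1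
      linear_combination (-(u (j + 1))⁻¹) * r1 + ((u (j + 1))⁻¹ + 1) * r2 +
        ((1 - u (j + 1))⁻¹ - u (j + 1) * (1 - (u (j + 1)) ^ 2)⁻¹) * r3
    rw [hkey]
    ring
  have hpartial : ∀ n, ∑ j ∈ Finset.range n, (p (j + 1))⁻¹ = G n - G 0 := by
    intro n
    rw [← Finset.sum_range_sub G n]
    exact Finset.sum_congr rfl fun j _ => hterm j
  -- limits
  have htend0 : Tendsto (fun n => u (n + 1)) atTop (nhds 0) := by
    rw [tendsto_zero_iff_norm_tendsto_zero]
    apply squeeze_zero (fun n => norm_nonneg _) (g := fun n => ‖z‖ ^ n)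
    · intro n
      rw [habsu]
      exact pow_le_pow_of_le_one (norm_nonneg z) hz1.le
        (le_trans (Nat.le_of_lt (n.lt_two_pow_self)) (Nat.pow_le_pow_right (by norm_num) (Nat.le_succ n)))
    · exact tendsto_pow_atTop_nhds_zero_of_lt_one (norm_nonneg z) hz1
  have hGtend : Tendsto G atTop (nhds (z - z⁻¹)) := by
    have h1 : Tendsto (fun n => ((1 : ℂ) - u (n + 1))⁻¹) atTop (nhds 1) := by
      have h2 : Tendsto (fun n => (1 : ℂ) - u (n + 1)) atTop (nhds 1) := by
        simpa using tendsto_const_nhds.sub htend0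
      simpa using h2.inv₀ one_ne_zero
    simpa using tendsto_const_nhds.mul h1
  have hL : (z - z⁻¹) - G 0 = z := by
    rw [hG]
    simp only
    rw [husq 0, hu_base]
    have h3 : (1 : ℂ) - z ^ 2 ≠ 0 := by
      have := hone_sub 1
      rwa [husq 0, hu_base] at this
    field_simp
    ring
  -- summability bound
  have h1z2 : (0:ℝ) < 1 - ‖z‖ ^ 2 := by nlinarith [norm_nonneg z]
  have hrep : ∀ m, (p m)⁻¹ = (z - z⁻¹) * u m / ((u m) ^ 2 - 1) := by
    intro m
    have hne2 : (u m) ^ 2 - 1 ≠ 0 := by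
      intro h
      apply hone_sub m
      have h4 : (1 - u m) * (1 + u m) = 0 := by linear_combination -h
      rcases mul_eq_zero.mp h4 with h' | h'
      · exact h'
      · exact absurd (by linear_combination h' : u m = -1) (by
          intro hm; have := habs_u m; rw [hm] at this; simp at this)
    rw [hpinv, div_eq_div_iff (husub m) hne2]
    have r3 : u m * (u m)⁻¹ = 1 := mul_inv_cancel₀ (hu0 m)
    linear_combination (z - z⁻¹) * r3
  have hu_le_z : ∀ m, 1 ≤ m → ‖u m‖ ≤ ‖z‖ := by
    intro m hm
    rw [habsu]
    calc ‖z‖ ^ 2 ^ m ≤ ‖z‖ ^ 1 :=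
          pow_le_pow_of_le_one (norm_nonneg z) hz1.le Nat.one_le_two_pow
      _ = ‖z‖ := pow_one _
  have hbound : ∀ j : ℕ, ‖(p (j + 1))⁻¹‖ ≤ (‖z - z⁻¹‖ / (1 - ‖z‖ ^ 2)) * ‖z‖ ^ j := by
    intro j
    rw [hrep (j + 1), norm_div, norm_mul]
    have hden : 1 - ‖z‖ ^ 2 ≤ ‖(u (j + 1)) ^ 2 - 1‖ := by
      have h5 : ‖(1:ℂ)‖ - ‖(u (j + 1)) ^ 2‖ ≤ ‖(1:ℂ) - (u (j + 1)) ^ 2‖ := norm_sub_norm_le _ _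
      rw [norm_sub_rev] at h5
      have h6 : ‖(u (j + 1)) ^ 2‖ ≤ ‖z‖ ^ 2 := by
        rw [norm_pow]
        exact pow_le_pow_left₀ (norm_nonneg _) (hu_le_z (j + 1) (Nat.le_add_left 1 j)) 2
      simp only [norm_one] at h5
      linarith
    have hnum : ‖u (j + 1)‖ ≤ ‖z‖ ^ j := by
      rw [habsu]
      exact pow_le_pow_of_le_one (norm_nonneg z) hz1.le
        (le_trans (Nat.le_of_lt (j.lt_two_pow_self)) (Nat.pow_le_pow_right (by norm_num) (Nat.le_succ j)))
    calc ‖z - z⁻¹‖ * ‖u (j + 1)‖ / ‖(u (j + 1)) ^ 2 - 1‖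
        ≤ ‖z - z⁻¹‖ * ‖z‖ ^ j / (1 - ‖z‖ ^ 2) := by gcongr
      _ = (‖z - z⁻¹‖ / (1 - ‖z‖ ^ 2)) * ‖z‖ ^ j := by ring
  have hsum_norm : Summable (fun j : ℕ => ‖(p (j + 1))⁻¹‖) :=
    Summable.of_nonneg_of_le (fun j => norm_nonneg _) hbound
      ((summable_geometric_of_lt_one (norm_nonneg z) hz1).mul_left _)
  have hsum : Summable (fun j : ℕ => (p (j + 1))⁻¹) := Summable.of_norm hsum_norm
  have htsum : (∑' j : ℕ, (p (j + 1))⁻¹) = z := by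
    have h1 := hsum.hasSum.tendsto_sum_nat
    have h2 : Tendsto (fun n => ∑ j ∈ Finset.range n, (p (j + 1))⁻¹) atTop (nhds z) := by
      have h3 := hGtend.sub_const (G 0)
      rw [hL] at h3
      exact h3.congr fun n => (hpartial n).symm
    exact tendsto_nhds_unique h1 h2
  refine ⟨?_, hsum_norm, ?_, ?_⟩
  · intro k
    constructor
    · intro x hx heq
      have h2 : u k + (u k)⁻¹ = 2 * (x : ℂ) := by
        rw [hIter k] at heq
        linear_combination (-2 : ℂ) * heq
      have h3 := aux_abs_one x hx.1 hx.2 (u k) (hu0 k) h2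
      exact (habs_u k).ne h3
    · intro h0
      rw [hIter k] at h0
      have r3 : u k * (u k)⁻¹ = 1 := mul_inv_cancel₀ (hu0 k)
      have h2 : (u k) ^ 2 = -1 := by linear_combination 2 * u k * h0 - r3
      have h3 : ‖u k‖ ^ 2 = 1 := by rw [← norm_pow, h2]; simp
      nlinarith [habs_u k, norm_nonneg (u k)]
  · rw [htsum]; linear_combination hzq
  · rw [htsum]; exact hz1
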